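/- Let (W,S) be a finite Coxeter system of rank m. For r₁, r₂ ∈ {−1,…,m}, the coordinate-wise (Schur) product of Coxeter codes satisfies C_W(r₁) ⊙ C_W(r₂) ⊆ C_W(r₁+r₂), with the convention C_W(r) = F₂^W for r ≥ m. -/

import Mathlib

open Pointwise

/-- The order-`r` Coxeter code of type `(W,S)`: the `F₂`-span of the indicator
functions of standard cosets `σ⟨J⟩` of rank `m - r` (`m` the rank of the system). -/
noncomputable def coxeterCode {B W : Type*} [Fintype B] [Group W] [Fintype W]
    {M : CoxeterMatrix B} (cs : CoxeterSystem M W) (r : ℤ) :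
    Submodule (ZMod 2) (W → ZMod 2) :=
  Submodule.span (ZMod 2)
    {f | ∃ (σ : W) (J : Finset B), (J.card : ℤ) = (Fintype.card B : ℤ) - r ∧
      f = Set.indicator (σ • (Subgroup.closure (cs.simple '' ↑J) : Set W)) (fun _ => 1)}


/-- Any set closed under right multiplication by a subgroup `P` (i.e. a union of
left cosets of `P`) has indicator function in the span of coset indicators. -/
lemma indicator_mem_span_cosets {W : Type*} [Group W] [Fintype W] (P : Subgroup W) :
    ∀ n : ℕ, ∀ A : Set W, A.ncard ≤ n → (∀ x ∈ A, ∀ p ∈ P, x * p ∈ A) →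
    A.indicator (fun _ => (1 : ZMod 2)) ∈
      Submodule.span (ZMod 2)
        {f | ∃ σ : W, f = Set.indicator (σ • (P : Set W)) (fun _ => (1 : ZMod 2))} := by
  intro n
  induction n with
  | zero =>
    intro A hcard hA
    have : A = ∅ := (Set.ncard_eq_zero A.toFinite).mp (Nat.le_zero.mp hcard)
    rw [this, Set.indicator_empty]
    exact Submodule.zero_mem _
  | succ n ih =>
    intro A hcard hA
    rcases Set.eq_empty_or_nonempty A with rfl | ⟨x, hx⟩
    · rw [Set.indicator_empty]
      exact Submodule.zero_mem _
    · have hsub : x • (P : Set W) ⊆ A := by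
        rintro y hy
        rw [Set.mem_smul_set] at hy
        obtain ⟨p, hp, rfl⟩ := hy
        simpa [smul_eq_mul] using hA x hx p hp
      set A' := A \ x • (P : Set W) with hA'def
      have hxP : x ∈ x • (P : Set W) := by
        rw [Set.mem_smul_set]
        exact ⟨1, P.one_mem, by simp⟩
      have hA' : ∀ y ∈ A', ∀ p ∈ P, y * p ∈ A' := by
        rintro y ⟨hyA, hyP⟩ p hp
        refine ⟨hA y hyA p hp, fun hmem => hyP ?_⟩
        rw [Set.mem_smul_set_iff_inv_smul_mem] at hmem ⊢
        have : x⁻¹ • (y * p) * p⁻¹ ∈ P := P.mul_mem hmem (P.inv_mem hp)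
        simpa [smul_eq_mul, mul_assoc] using this
      have hlt : A'.ncard < A.ncard := by
        apply Set.ncard_lt_ncard _ A.toFinite
        exact ⟨Set.diff_subset, fun hAA => (hAA hx).2 hxP⟩
      have hcard' : A'.ncard ≤ n := by omega
      have hunion : A = (x • (P : Set W)) ∪ A' := (Set.union_diff_cancel hsub).symm
      have hdisj : Disjoint (x • (P : Set W)) A' := Set.disjoint_sdiff_right
      rw [hunion, Set.indicator_union_of_disjoint hdisj]
      exact add_mem (Submodule.subset_span ⟨x, rfl⟩) (ih A' hcard' hA')

lemma indicator_mul_indicator {W : Type*} (s t : Set W) :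
    Set.indicator s (fun _ => (1 : ZMod 2)) * Set.indicator t (fun _ => 1)
      = Set.indicator (s ∩ t) (fun _ => 1) := by
  funext w
  by_cases hs : w ∈ s <;> by_cases ht : w ∈ t <;>
    simp [Set.indicator, hs, ht]


/-- multiplication: `C_W(r₁) ⊙ C_W(r₂) ⊆ C_W(r₁+r₂)`, where `⊙` is
the coordinate-wise (Schur) product, with the convention `C_W(r) = F₂^W` for `r ≥ m`. -/
theorem coxeterCode_schur_mul {B W : Type*} [Fintype B] [Group W] [Fintype W]
    {M : CoxeterMatrix B} (cs : CoxeterSystem M W) (r₁ r₂ : ℤ)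
    (h₁ : -1 ≤ r₁) (h₂ : -1 ≤ r₂)
    (h₁' : r₁ ≤ (Fintype.card B : ℤ)) (h₂' : r₂ ≤ (Fintype.card B : ℤ)) :
    ∀ f ∈ coxeterCode cs r₁, ∀ g ∈ coxeterCode cs r₂,
      f * g ∈ (if (Fintype.card B : ℤ) ≤ r₁ + r₂ then ⊤ else coxeterCode cs (r₁ + r₂)) := by
  classical
  intro f hf g hg
  split_ifs with hm
  · trivial
  push_neg at hm
  revert g hg
  induction hf using Submodule.span_induction with
  | zero => intro g hg; simpa using (coxeterCode cs (r₁ + r₂)).zero_mem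
  | add f f' _ _ ihf ihf' =>
    intro g hg
    rw [add_mul]
    exact add_mem (ihf g hg) (ihf' g hg)
  | smul c f _ ihf =>
    intro g hg
    rw [smul_mul_assoc]
    exact Submodule.smul_mem _ c (ihf g hg)
  | mem f hfmem =>
    intro g hg
    induction hg using Submodule.span_induction with
    | zero => simpa using (coxeterCode cs (r₁ + r₂)).zero_mem
    | add g g' _ _ ihg ihg' =>
      rw [mul_add]; exact add_mem ihg ihg'
    | smul c g _ ihg =>
      rw [mul_smul_comm]; exact Submodule.smul_mem _ c ihg
    | mem g hgmem =>
      obtain ⟨σ₁, J₁, hJ₁, rfl⟩ := hfmem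
      obtain ⟨σ₂, J₂, hJ₂, rfl⟩ := hgmem
      rw [indicator_mul_indicator]
      set H₁ := Subgroup.closure (cs.simple '' ((J₁ : Finset B) : Set B)) with hH₁
      set H₂ := Subgroup.closure (cs.simple '' ((J₂ : Finset B) : Set B)) with hH₂
      set A := (σ₁ • (H₁ : Set W)) ∩ (σ₂ • (H₂ : Set W)) with hAdef
      -- choose J' ⊆ J₁ ∩ J₂ of the right cardinality
      have hk0 : (0 : ℤ) ≤ (Fintype.card B : ℤ) - (r₁ + r₂) := by omega
      have hcardinter : (Fintype.card B : ℤ) - (r₁ + r₂) ≤ ((J₁ ∩ J₂).card : ℤ) := by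
        have h1 := Finset.card_union_add_card_inter J₁ J₂
        have h2 : (J₁ ∪ J₂).card ≤ Fintype.card B := Finset.card_le_univ _
        have h3 : ((J₁ ∪ J₂).card : ℤ) + ((J₁ ∩ J₂).card : ℤ)
            = (J₁.card : ℤ) + (J₂.card : ℤ) := by exact_mod_cast congrArg (Nat.cast (R := ℤ)) h1
        have h4 : ((J₁ ∪ J₂).card : ℤ) ≤ (Fintype.card B : ℤ) := by exact_mod_cast h2
        omega
      obtain ⟨J', hJ'sub, hJ'card⟩ :=
        Finset.exists_subset_card_eq (s := J₁ ∩ J₂)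
          (n := ((Fintype.card B : ℤ) - (r₁ + r₂)).toNat) (by omega)
      have hJ'cardZ : ((J').card : ℤ) = (Fintype.card B : ℤ) - (r₁ + r₂) := by
        rw [hJ'card]; omega
      set P := Subgroup.closure (cs.simple '' ((J' : Finset B) : Set B)) with hP
      have hP₁ : P ≤ H₁ := Subgroup.closure_mono (Set.image_mono (by
        intro i hi
        exact Finset.mem_coe.mpr (Finset.mem_of_mem_inter_left (hJ'sub (Finset.mem_coe.mp hi)))))
      have hP₂ : P ≤ H₂ := Subgroup.closure_mono (Set.image_mono (by
        intro i hi
        exact Finset.mem_coe.mpr (Finset.mem_of_mem_inter_right (hJ'sub (Finset.mem_coe.mp hi)))))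
      have hA : ∀ x ∈ A, ∀ p ∈ P, x * p ∈ A := by
        rintro x ⟨hx₁, hx₂⟩ p hp
        constructor
        · rw [Set.mem_smul_set_iff_inv_smul_mem] at hx₁ ⊢
          have : (σ₁⁻¹ • x) * p ∈ H₁ := H₁.mul_mem hx₁ (hP₁ hp)
          simpa [smul_eq_mul, mul_assoc] using this
        · rw [Set.mem_smul_set_iff_inv_smul_mem] at hx₂ ⊢
          have : (σ₂⁻¹ • x) * p ∈ H₂ := H₂.mul_mem hx₂ (hP₂ hp)
          simpa [smul_eq_mul, mul_assoc] using this
      have hmem := indicator_mem_span_cosets P A.ncard A le_rfl hA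
      refine Submodule.span_le.mpr ?_ hmem
      rintro _ ⟨σ, rfl⟩
      exact Submodule.subset_span ⟨σ, J', hJ'cardZ, rfl⟩
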